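/- arXiv:1511.08606 — 3 statements merged into one kernel-verified Lean document; each statement's English description precedes it below -/
import Mathlib

section
/- Let R be a commutative ring, let V be an R-module, and let A : V → V be an R-linear endomorphism. Consider the R-linear endomorphism Θ of V^r (r ≥ 1) given by Θ(X_1, …, X_r) = (X_2, …, X_r, A(X_1)). If V is finite free, then det(1 - Θ) = det(1 - A), where 1 denotes the identity endomorphism. -/
/-- Let `R` be a commutative ring, `V` a finite free `R`-module, `A : V → V` an `R`-linear
endomorphism, and `Θ` the endomorphism of `V^r` (`r ≥ 1`) given by
`Θ(X_1, …, X_r) = (X_2, …, X_r, A X_1)`. Then `det (1 - Θ) = det (1 - A)`. -/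
theorem stmt0 (R : Type*) [CommRing R] (V : Type*) [AddCommGroup V] [Module R V]
    [Module.Free R V] [Module.Finite R V]
    (r : ℕ) (hr : 1 ≤ r) (A : V →ₗ[R] V)
    (Θ : (Fin r → V) →ₗ[R] (Fin r → V))
    (hΘ : ∀ (X : Fin r → V) (i : Fin r),
      Θ X i = if h : (i : ℕ) + 1 < r then X ⟨(i : ℕ) + 1, h⟩ else A (X ⟨0, by omega⟩)) :
    LinearMap.det (LinearMap.id - Θ) = LinearMap.det (LinearMap.id - A) := by
  classical
  haveI : NeZero r := ⟨by omega⟩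
  set ι := Module.Free.ChooseBasisIndex R V with hι
  let b : Module.Basis ι R V := Module.Free.chooseBasis R V
  let B : Module.Basis (Fin r × ι) R (Fin r → V) :=
    (Pi.basis fun _ : Fin r => b).reindex (Equiv.sigmaEquivProd (Fin r) ι)
  let a : Matrix ι ι R := LinearMap.toMatrix b b A
  rw [← LinearMap.det_toMatrix B (LinearMap.id - Θ),
    ← LinearMap.det_toMatrix b (LinearMap.id - A)]
  have hA : LinearMap.toMatrix b b (LinearMap.id - A) = 1 - a := by
    simp only [map_sub, LinearMap.toMatrix_id, a]
  rw [hA]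
  -- the matrix of Θ
  let mθ : Matrix (Fin r × ι) (Fin r × ι) R := fun p q =>
    if h : (p.1 : ℕ) + 1 < r then (if q.1 = ⟨(p.1 : ℕ) + 1, h⟩ ∧ q.2 = p.2 then 1 else 0)
    else (if q.1 = 0 then a p.2 q.2 else 0)
  have hBapp : ∀ (j : Fin r) (l : ι), B (j, l) = Pi.single j (b l) := by
    intro j l
    simp [B, Module.Basis.reindex_apply]
  have hBrepr : ∀ (x : Fin r → V) (i : Fin r) (k : ι),
      B.repr x (i, k) = b.repr (x i) k := by
    intro x i k
    simp [B, Module.Basis.repr_reindex_apply]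
  have hθmat : LinearMap.toMatrix B B Θ = mθ := by
    ext ⟨i, k⟩ ⟨j, l⟩
    rw [LinearMap.toMatrix_apply, hBapp, hBrepr, hΘ]
    by_cases h : (i : ℕ) + 1 < r
    · rw [dif_pos h]
      simp only [mθ, dif_pos h]
      by_cases hj : (⟨(i : ℕ) + 1, h⟩ : Fin r) = j
      · rw [Pi.single_apply, if_pos hj]
        simp [hj.symm, Finsupp.single_apply, eq_comm]
      · rw [Pi.single_apply, if_neg hj]
        have : ¬(j = ⟨(i : ℕ) + 1, h⟩ ∧ l = k) := by
          intro hc; exact hj (hc.1.symm)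
        simp [this]
    · rw [dif_neg h]
      simp only [mθ, dif_neg h]
      by_cases hj : ((⟨0, by omega⟩ : Fin r) : Fin r) = j
      · rw [Pi.single_apply, if_pos hj]
        have hj0 : j = 0 := by
          rw [← hj]; rfl
        rw [if_pos hj0]
        simp [a, LinearMap.toMatrix_apply]
      · rw [Pi.single_apply, if_neg hj]
        have hj0 : ¬ j = 0 := by
          intro hc; apply hj; rw [hc]; rfl
        simp [hj0]
  have hM : LinearMap.toMatrix B B (LinearMap.id - Θ) = 1 - mθ := by
    rw [map_sub, LinearMap.toMatrix_id, hθmat]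
  rw [hM]
  -- the unipotent matrix u and the triangular matrix t
  let u : Matrix (Fin r × ι) (Fin r × ι) R := fun p q =>
    if p.1 ≤ q.1 ∧ p.2 = q.2 then 1 else 0
  let t : Matrix (Fin r × ι) (Fin r × ι) R := fun p q =>
    (if p = q then 1 else 0) - (if (p.1 : ℕ) + 1 < r then 0 else a p.2 q.2)
  -- key product identity
  have hprod : (1 - mθ) * u = t := by
    ext ⟨i, k⟩ ⟨j, l⟩
    rw [Matrix.sub_mul, Matrix.one_mul, Matrix.sub_apply]
    have hmul : (mθ * u) (i, k) (j, l) =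
        if h : (i : ℕ) + 1 < r then (if (⟨(i : ℕ) + 1, h⟩ : Fin r) ≤ j ∧ k = l then 1 else 0)
        else a k l := by
      rw [Matrix.mul_apply]
      by_cases h : (i : ℕ) + 1 < r
      · rw [dif_pos h]
        rw [Fintype.sum_prod_type]
        rw [Finset.sum_eq_single (⟨(i : ℕ) + 1, h⟩ : Fin r)]
        · rw [Finset.sum_eq_single k]
          · simp only [mθ, u, dif_pos h, true_and]
            simp
          · intro s2 _ hs2
            simp only [mθ, dif_pos h]
            rw [if_neg (by rintro ⟨-, hc⟩; exact hs2 hc), zero_mul]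
          · simp
        · intro s1 _ hs1
          apply Finset.sum_eq_zero
          intro s2 _
          simp only [mθ, dif_pos h]
          simp [hs1]
        · simp
      · rw [dif_neg h]
        rw [Fintype.sum_prod_type]
        rw [Finset.sum_eq_single (0 : Fin r)]
        · rw [Finset.sum_eq_single l]
          · simp only [mθ, u, dif_neg h, if_pos rfl]
            simp [Fin.zero_le]
          · intro s2 _ hs2
            simp only [mθ, u, dif_neg h, if_pos rfl]
            simp [hs2]
          · simp
        · intro s1 _ hs1
          apply Finset.sum_eq_zero
          intro s2 _
          simp only [mθ, dif_neg h]
          simp [hs1]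
        · simp
    rw [hmul]
    by_cases h : (i : ℕ) + 1 < r
    · rw [dif_pos h]
      simp only [t, if_pos h, sub_zero, u]
      have key : ((i ≤ j ∧ k = l) ∧ ¬((⟨(i : ℕ) + 1, h⟩ : Fin r) ≤ j ∧ k = l)) ↔
          ((i, k) = (j, l)) := by
        constructor
        · rintro ⟨⟨h1, h2⟩, h3⟩
          have h4 : ¬ (⟨(i : ℕ) + 1, h⟩ : Fin r) ≤ j := fun hc => h3 ⟨hc, h2⟩
          have hij : i = j := by
            have h1' : (i : ℕ) ≤ (j : ℕ) := h1
            have h2' : ¬ ((i : ℕ) + 1 ≤ (j : ℕ)) := h4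
            exact Fin.ext (by omega)
          exact Prod.ext hij h2
        · rintro hc
          obtain ⟨h1, h2⟩ := Prod.mk.injEq .. ▸ hc
          refine ⟨⟨le_of_eq h1, h2⟩, ?_⟩
          rintro ⟨hc1, -⟩
          have : (i : ℕ) + 1 ≤ (j : ℕ) := hc1
          omega
      by_cases h1 : (i, k) = (j, l)
      · have h5 := key.mpr h1
        rw [if_pos h5.1, if_neg h5.2, if_pos h1]
        norm_num
      · rw [if_neg h1]
        by_cases h2 : i ≤ j ∧ k = l
        · have h3 : (⟨(i : ℕ) + 1, h⟩ : Fin r) ≤ j ∧ k = l := by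
            by_contra h3
            exact h1 (key.mp ⟨h2, h3⟩)
          rw [if_pos h2, if_pos h3]; ring
        · have h3 : ¬((⟨(i : ℕ) + 1, h⟩ : Fin r) ≤ j ∧ k = l) := by
            rintro ⟨hc1, hc2⟩
            have hc1' : (i : ℕ) + 1 ≤ (j : ℕ) := hc1
            exact h2 ⟨by omega, hc2⟩
          rw [if_neg h2, if_neg h3]; ring
    · rw [dif_neg h]
      simp only [t, if_neg h, u]
      congr 1
      by_cases h1 : (i, k) = (j, l)
      · obtain ⟨h1a, h1b⟩ := Prod.mk.injEq .. ▸ h1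
        rw [if_pos ⟨le_of_eq h1a, h1b⟩, if_pos h1]
      · rw [if_neg h1]
        rw [if_neg]
        rintro ⟨hc1, hc2⟩
        apply h1
        have hc1' : (i : ℕ) ≤ (j : ℕ) := hc1
        have hj : (j : ℕ) < r := j.isLt
        have : i = j := Fin.ext (by omega)
        exact Prod.ext this hc2
  -- determinant of u is 1
  have hu_tri : u.BlockTriangular Prod.fst := by
    intro p q hpq
    simp only [u]
    rw [if_neg]
    rintro ⟨hc, -⟩
    exact absurd hc (not_le.mpr hpq)
  have hu_det : u.det = 1 := by
    rw [hu_tri.det_fintype]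
    apply Finset.prod_eq_one
    intro i _
    have hid : u.toSquareBlock Prod.fst i = 1 := by
      ext ⟨p, hp⟩ ⟨q, hq⟩
      rw [Matrix.toSquareBlock_def]
      simp only [Matrix.toSquareBlock_def, Matrix.of_apply, u, Matrix.one_apply,
        Subtype.mk.injEq]
      have hpq1 : p.1 = q.1 := hp.trans hq.symm
      have hiff : (p.1 ≤ q.1 ∧ p.2 = q.2) ↔ p = q := by
        rw [Prod.ext_iff]
        constructor
        · rintro ⟨-, h2⟩; exact ⟨hpq1, h2⟩
        · rintro ⟨h1, h2⟩; exact ⟨le_of_eq h1, h2⟩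
      rw [if_congr hiff rfl rfl]
    rw [hid, Matrix.det_one]
  -- determinant of t is det (1 - a)
  have ht_tri : t.BlockTriangular (fun p => (p.1 : Fin r).rev) := by
    intro p q hpq
    have hlt : p.1 < q.1 := Fin.rev_lt_rev.mp hpq
    simp only [t]
    have h1 : ¬ p = q := by
      intro hc; rw [hc] at hlt; exact lt_irrefl _ hlt
    have h2 : (p.1 : ℕ) + 1 < r := by
      have hlt' : (p.1 : ℕ) < (q.1 : ℕ) := hlt
      have hq := q.1.isLt
      omega
    rw [if_neg h1, if_pos h2, sub_zero]
  have hrevval : ∀ (x : Fin r) (i : Fin r), x.rev = i → (x : ℕ) = r - 1 - (i : ℕ) := by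
    intro x i hx
    have := congrArg Fin.val hx
    rw [Fin.val_rev] at this
    have hx' := x.isLt
    omega
  have ht_det : t.det = (1 - a).det := by
    rw [ht_tri.det_fintype]
    rw [Fintype.prod_eq_single (0 : Fin r)]
    · -- block at rev value 0, i.e. p.1 = last
      let e : {p : Fin r × ι // (p.1 : Fin r).rev = 0} ≃ ι :=
        { toFun := fun p => p.1.2
          invFun := fun l => ⟨((0 : Fin r).rev, l), Fin.rev_rev _⟩
          left_inv := by
            rintro ⟨⟨p1, p2⟩, hp⟩
            apply Subtype.ext
            have hp1 : p1 = (0 : Fin r).rev := Fin.rev_eq_iff.mp hp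
            simp [hp1]
          right_inv := fun l => rfl }
      have hblock : t.toSquareBlock (fun p => (p.1 : Fin r).rev) 0 =
          (1 - a).submatrix e e := by
        ext ⟨p, hp⟩ ⟨q, hq⟩
        have hp1 : ¬ ((p.1 : ℕ) + 1 < r) := by
          have := hrevval p.1 0 hp
          simp at this
          omega
        have hpq1 : p.1 = q.1 := by
          rw [Fin.rev_eq_iff.mp hp, Fin.rev_eq_iff.mp hq]
        rw [Matrix.toSquareBlock_def]
        simp only [Matrix.toSquareBlock_def, Matrix.of_apply, t, Matrix.submatrix_apply,
          Matrix.sub_apply, Matrix.one_apply, if_neg hp1, Equiv.coe_fn_mk, e]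
        congr 1
        have hiff : p = q ↔ p.2 = q.2 := by
          rw [Prod.ext_iff]
          constructor
          · rintro ⟨-, h2⟩; exact h2
          · intro h2; exact ⟨hpq1, h2⟩
        rw [if_congr hiff rfl rfl]
      rw [hblock, Matrix.det_submatrix_equiv_self]
    · -- other blocks are identity
      intro i hi
      have hid : t.toSquareBlock (fun p => (p.1 : Fin r).rev) i = 1 := by
        ext ⟨p, hp⟩ ⟨q, hq⟩
        have hp1 : (p.1 : ℕ) + 1 < r := by
          have h1 := hrevval p.1 i hp
          have h2 : (i : ℕ) ≠ 0 := by
            intro hc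
            exact hi (Fin.ext (by simpa using hc))
          have := i.isLt
          omega
        have hpq1 : p.1 = q.1 := by
          rw [Fin.rev_eq_iff.mp hp, Fin.rev_eq_iff.mp hq]
        rw [Matrix.toSquareBlock_def]
        simp only [Matrix.toSquareBlock_def, Matrix.of_apply, t, Matrix.one_apply,
          if_pos hp1, sub_zero, Subtype.mk.injEq]
      rw [hid, Matrix.det_one]
  -- conclude
  have hfin := congrArg Matrix.det hprod
  rw [Matrix.det_mul, hu_det, mul_one, ht_det] at hfin
  exact hfin
end

section
/- Let z, ζ ∈ ℂ^×, let m ≥ 1 and 1 ≤ a ≤ m-1 with gcd(a, m) = 1. Consider the system of m equations in the unknowns ζ_1, …, ζ_m ∈ ℂ: ζ_{m-a+i} = ζ · ζ_i for 1 ≤ i ≤ a, and ζ_{a+j} = ζ^{-1} z · ζ_j for 1 ≤ j ≤ m-a (indices taken in {1,…,m}). Then this linear system has a nonzero solution if and only if ζ^m = z^{m-a}; moreover in that case the solution space is one-dimensional and every nonzero solution has all coordinates nonzero. -/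
private lemma orbit_aux {m a : ℕ} (hm : 0 < m) (ha : 0 < a) (ham : a < m)
    {ζ z : ℂ} (hζ : ζ ≠ 0) (v : Fin m → ℂ)
    (h1 : ∀ i : ℕ, ∀ _ : i < a, v ⟨i + (m - a), by omega⟩ = ζ * v ⟨i, by omega⟩)
    (h2 : ∀ j : ℕ, ∀ _ : j < m - a, v ⟨j + a, by omega⟩ = ζ⁻¹ * z * v ⟨j, by omega⟩) :
    ∀ t : ℕ, v ⟨t * a % m, Nat.mod_lt _ hm⟩ =
      ζ⁻¹ ^ (t * a / m) * (ζ⁻¹ * z) ^ (t - t * a / m) * v ⟨0, hm⟩ := by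
  intro t
  induction t with
  | zero => simp
  | succ t ih =>
    have hqt : t * a / m ≤ t := by
      calc t * a / m ≤ t * m / m := Nat.div_le_div_right (Nat.mul_le_mul_left t ham.le)
      _ = t := Nat.mul_div_cancel t hm
    have hdm := Nat.div_add_mod (t * a) m
    have hr : t * a % m < m := Nat.mod_lt _ hm
    by_cases hcase : t * a % m + a < m
    · have e1 : (t + 1) * a % m = t * a % m + a := by
        rw [Nat.succ_mul, Nat.add_mod, Nat.mod_eq_of_lt ham, Nat.mod_eq_of_lt hcase]
      have e2 : (t + 1) * a / m = t * a / m := by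
        rw [Nat.succ_mul, show t * a + a = (t * a % m + a) + m * (t * a / m) by omega,
          Nat.add_mul_div_left _ _ hm, Nat.div_eq_of_lt hcase, Nat.zero_add]
      simp only [e1, e2]
      have h2' := h2 (t * a % m) (by omega)
      rw [h2', ih, show t + 1 - t * a / m = (t - t * a / m) + 1 by omega, pow_succ]
      ring
    · have e1 : (t + 1) * a % m = t * a % m + a - m := by
        rw [Nat.succ_mul, Nat.add_mod, Nat.mod_eq_of_lt ham, Nat.mod_eq_sub_mod (by omega),
          Nat.mod_eq_of_lt (by omega)]
      have e2 : (t + 1) * a / m = t * a / m + 1 := by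
        rw [Nat.succ_mul, show t * a + a = (t * a % m + a) + m * (t * a / m) by omega,
          Nat.add_mul_div_left _ _ hm,
          show (t * a % m + a) / m = 1 from Nat.div_eq_of_lt_le (by omega) (by omega)]
        omega
      have h1' := h1 (t * a % m + a - m) (by omega)
      have e3 : (t * a % m + a - m) + (m - a) = t * a % m := by omega
      simp only [e3] at h1'
      rw [ih] at h1'
      simp only [e1, e2]
      have hv : v ⟨t * a % m + a - m, by omega⟩ =
          ζ⁻¹ * (ζ⁻¹ ^ (t * a / m) * (ζ⁻¹ * z) ^ (t - t * a / m) * v ⟨0, hm⟩) := by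
        apply mul_left_cancel₀ hζ
        rw [← h1']
        field_simp
      rw [hv, show t + 1 - (t * a / m + 1) = t - t * a / m by omega, pow_succ]
      ring

private lemma surj_aux {m a : ℕ} (hm : 0 < m) (hgcd : Nat.gcd a m = 1) :
    ∀ k : ℕ, k < m → ∃ t : ℕ, t * a % m = k := by
  intro k hk
  haveI : NeZero m := ⟨hm.ne'⟩
  set u : (ZMod m)ˣ := ZMod.unitOfCoprime a hgcd with hu
  refine ⟨((k : ZMod m) * (u⁻¹ : (ZMod m)ˣ)).val, ?_⟩
  have hcast : ((((k : ZMod m) * (u⁻¹ : (ZMod m)ˣ)).val * a : ℕ) : ZMod m) = (k : ZMod m) := by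
    push_cast
    rw [ZMod.natCast_val, ZMod.cast_id]
    have huv : ((u : (ZMod m)ˣ) : ZMod m) = (a : ZMod m) := ZMod.coe_unitOfCoprime a hgcd
    rw [← huv, mul_assoc, ← Units.val_mul, inv_mul_cancel, Units.val_one, mul_one]
  calc ((k : ZMod m) * (u⁻¹ : (ZMod m)ˣ)).val * a % m
      = ((((k : ZMod m) * (u⁻¹ : (ZMod m)ˣ)).val * a : ℕ) : ZMod m).val :=
        (ZMod.val_natCast _ _).symm
    _ = ((k : ZMod m)).val := by rw [hcast]
    _ = k := by rw [ZMod.val_natCast, Nat.mod_eq_of_lt hk]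

private lemma coord_aux {m a : ℕ} (hm : 0 < m) (ha : 0 < a) (ham : a < m)
    (hgcd : Nat.gcd a m = 1) {ζ z : ℂ} (hζ : ζ ≠ 0) (hz : z ≠ 0) (i : Fin m) :
    ∃ c : ℂ, c ≠ 0 ∧ ∀ v : Fin m → ℂ,
      (∀ i : ℕ, ∀ _ : i < a, v ⟨i + (m - a), by omega⟩ = ζ * v ⟨i, by omega⟩) →
      (∀ j : ℕ, ∀ _ : j < m - a, v ⟨j + a, by omega⟩ = ζ⁻¹ * z * v ⟨j, by omega⟩) →
      v i = c * v ⟨0, hm⟩ := by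
  obtain ⟨t, ht⟩ := surj_aux hm hgcd i i.isLt
  refine ⟨ζ⁻¹ ^ (t * a / m) * (ζ⁻¹ * z) ^ (t - t * a / m),
    mul_ne_zero (pow_ne_zero _ (inv_ne_zero hζ))
      (pow_ne_zero _ (mul_ne_zero (inv_ne_zero hζ) hz)), ?_⟩
  intro v h1 h2
  have horb := orbit_aux hm ha ham hζ v h1 h2 t
  have hi : i = ⟨t * a % m, Nat.mod_lt _ hm⟩ := by
    apply Fin.ext; exact ht.symm
  rw [hi, horb]

/-- The linear system `ζ_{m-a+i} = ζ ζ_i` (`1 ≤ i ≤ a`), `ζ_{a+j} = ζ⁻¹ z ζ_j` (`1 ≤ j ≤ m-a`)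
in `ℂ^m` (with `gcd(a,m) = 1`) has a nonzero solution iff `ζ^m = z^{m-a}`, in which case the
solution space is one-dimensional and every nonzero solution has all coordinates nonzero. -/
theorem stmt3 (m a : ℕ) (hm : 1 ≤ m) (ha1 : 1 ≤ a) (ha2 : a ≤ m - 1)
    (hgcd : Nat.gcd a m = 1) (ζ z : ℂ) (hζ : ζ ≠ 0) (hz : z ≠ 0)
    (S : Set (Fin m → ℂ))
    (hS : S = {v | (∀ i : ℕ, ∀ _ : i < a, v ⟨i + (m - a), by omega⟩ = ζ * v ⟨i, by omega⟩) ∧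
        (∀ j : ℕ, ∀ _ : j < m - a, v ⟨j + a, by omega⟩ = ζ⁻¹ * z * v ⟨j, by omega⟩)}) :
    ((∃ v ∈ S, v ≠ 0) ↔ ζ ^ m = z ^ (m - a)) ∧
      (ζ ^ m = z ^ (m - a) →
        (∃ v ∈ S, v ≠ 0 ∧ ∀ w ∈ S, ∃ t : ℂ, w = t • v) ∧
        (∀ v ∈ S, v ≠ 0 → ∀ i, v i ≠ 0)) := by
  have hm0 : 0 < m := hm
  have ha0 : 0 < a := ha1
  have ham : a < m := by omega
  -- Forward direction: a nonzero solution forces ζ^m = z^(m-a)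
  have fwd : (∃ v ∈ S, v ≠ 0) → ζ ^ m = z ^ (m - a) := by
    rintro ⟨v, hvS, hv⟩
    rw [hS, Set.mem_setOf_eq] at hvS
    obtain ⟨h1, h2⟩ := hvS
    -- v 0 ≠ 0
    have hv0 : v ⟨0, hm0⟩ ≠ 0 := by
      obtain ⟨i, hi⟩ := Function.ne_iff.mp hv
      intro h0
      apply hi
      obtain ⟨c, _, hc⟩ := coord_aux hm0 ha0 ham hgcd hζ hz i
      rw [hc v h1 h2, h0, mul_zero]
      rfl
    have horb := orbit_aux hm0 ha0 ham hζ v h1 h2 m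
    simp only [Nat.mul_mod_right, Nat.mul_div_cancel_left a hm0] at horb
    have hK : ζ⁻¹ ^ a * (ζ⁻¹ * z) ^ (m - a) = 1 :=
      mul_right_cancel₀ hv0 (by rw [one_mul, ← horb])
    rw [mul_pow, ← mul_assoc, ← pow_add, show a + (m - a) = m by omega, inv_pow] at hK
    rw [inv_mul_eq_iff_eq_mul₀ (pow_ne_zero _ hζ), mul_one] at hK
    exact hK.symm
  -- Construction: given ζ^m = z^(m-a), build the explicit solution i ↦ w^i
  have bwd : ζ ^ m = z ^ (m - a) →
      (∃ v ∈ S, v ≠ 0 ∧ ∀ w ∈ S, ∃ t : ℂ, w = t • v) ∧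
      (∀ v ∈ S, v ≠ 0 → ∀ i, v i ≠ 0) := by
    intro h
    have hco : IsCoprime (a : ℤ) (m : ℤ) := by
      rw [Int.isCoprime_iff_gcd_eq_one]
      exact_mod_cast hgcd
    obtain ⟨s, t, hst⟩ := hco
    have hζz : ζ⁻¹ * z ≠ 0 := mul_ne_zero (inv_ne_zero hζ) hz
    set w : ℂ := (ζ⁻¹ * z) ^ s * z ^ t with hw
    have hw0 : w ≠ 0 := mul_ne_zero (zpow_ne_zero _ hζz) (zpow_ne_zero _ hz)
    -- key: (ζ⁻¹ z)^m = z^a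
    have hq : (ζ⁻¹ * z) ^ (m : ℤ) = z ^ (a : ℤ) := by
      rw [zpow_natCast, zpow_natCast, mul_pow, inv_pow,
        inv_mul_eq_iff_eq_mul₀ (pow_ne_zero _ hζ), h, ← pow_add]
      congr 1
      omega
    have hwa : w ^ a = ζ⁻¹ * z := by
      rw [← zpow_natCast w a, hw, mul_zpow, ← zpow_mul, ← zpow_mul,
        show s * (a : ℤ) = 1 - (m : ℤ) * t by linarith,
        zpow_sub₀ hζz, zpow_one, zpow_mul, hq, ← zpow_mul,
        show (a : ℤ) * t = t * (a : ℤ) by ring]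
      field_simp
    have hwm : w ^ m = z := by
      rw [← zpow_natCast w m, hw, mul_zpow, ← zpow_mul, ← zpow_mul,
        show s * (m : ℤ) = (m : ℤ) * s by ring, zpow_mul, hq, ← zpow_mul,
        show t * (m : ℤ) = 1 - (a : ℤ) * s by linarith,
        zpow_sub₀ hz, zpow_one]
      rw [show z ^ ((a : ℤ) * s) * (z / z ^ ((a : ℤ) * s))
          = z * (z ^ ((a : ℤ) * s) * (z ^ ((a : ℤ) * s))⁻¹) by ring,
        mul_inv_cancel₀ (zpow_ne_zero _ hz), mul_one]
    have hwb : w ^ (m - a) = ζ := by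
      have hcomb : w ^ (m - a) * w ^ a = w ^ m := by
        rw [← pow_add]; congr 1; omega
      rw [hwa, hwm] at hcomb
      apply mul_right_cancel₀ hζz
      rw [hcomb]
      field_simp
    set v : Fin m → ℂ := fun i => w ^ (i : ℕ) with hvdef
    have hvS : v ∈ S := by
      rw [hS, Set.mem_setOf_eq]
      constructor
      · intro i hi
        show w ^ (i + (m - a)) = ζ * w ^ i
        rw [pow_add, hwb]; ring
      · intro j hj
        show w ^ (j + a) = ζ⁻¹ * z * w ^ j
        rw [pow_add, hwa]; ring
    have hv0 : v ⟨0, hm0⟩ = 1 := pow_zero w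
    have hvne : v ≠ 0 := by
      intro h0
      have := congrFun h0 ⟨0, hm0⟩
      rw [hv0] at this
      exact one_ne_zero this
    refine ⟨⟨v, hvS, hvne, ?_⟩, ?_⟩
    · -- every solution is a multiple of v
      intro u huS
      rw [hS, Set.mem_setOf_eq] at huS
      obtain ⟨hu1, hu2⟩ := huS
      rw [hS, Set.mem_setOf_eq] at hvS
      obtain ⟨hv1, hv2⟩ := hvS
      refine ⟨u ⟨0, hm0⟩, ?_⟩
      funext i
      obtain ⟨c, _, hc⟩ := coord_aux hm0 ha0 ham hgcd hζ hz i
      have h1 := hc u hu1 hu2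
      have h2 := hc v hv1 hv2
      rw [hv0, mul_one] at h2
      simp only [Pi.smul_apply, smul_eq_mul, h1, h2]
      ring
    · -- all coordinates of a nonzero solution are nonzero
      intro u huS hune i
      rw [hS, Set.mem_setOf_eq] at huS
      obtain ⟨hu1, hu2⟩ := huS
      have hu0 : u ⟨0, hm0⟩ ≠ 0 := by
        obtain ⟨j, hj⟩ := Function.ne_iff.mp hune
        intro h0
        apply hj
        obtain ⟨c, _, hc⟩ := coord_aux hm0 ha0 ham hgcd hζ hz j
        rw [hc u hu1 hu2, h0, mul_zero]
        rfl
      obtain ⟨c, hcne, hc⟩ := coord_aux hm0 ha0 ham hgcd hζ hz i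
      rw [hc u hu1 hu2]
      exact mul_ne_zero hcne hu0
  refine ⟨⟨fwd, fun h => ?_⟩, bwd⟩
  obtain ⟨⟨v, hvS, hvne, _⟩, _⟩ := bwd h
  exact ⟨v, hvS, hvne⟩
end

section
/- Let m > 1 and let a, b, e be positive integers with bm - ae = 1 (so gcd(e,m)=1 and gcd(a,m)=1). Let G be a group, φ an automorphism of G, and g, c, h elements with: h^a = c^{-1} φ^m(c) and h^b = c^{-1} g φ^e(c), where h is fixed by φ (φ(h) = h). Then N(g) := g · φ^e(g) · φ^{2e}(g) ⋯ φ^{(m-1)e}(g) satisfies N(g) = c h c^{-1}. -/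
/-- Kottwitz's norm identity: with `bm - ae = 1`, `φ(h) = h`, `h^a = c⁻¹ φ^m(c)` and
`h^b = c⁻¹ g φ^e(c)`, the twisted norm `N(g) = g · φ^e(g) ⋯ φ^{(m-1)e}(g)` equals
`c h c⁻¹`. -/
theorem stmt19 (G : Type*) [Group G] (φ : MulAut G) (m a b e : ℕ)
    (hm : 1 < m) (ha : 0 < a) (hb : 0 < b) (he : 0 < e)
    (hbez : b * m = a * e + 1)
    (g c h : G) (hfix : φ h = h)
    (hA : h ^ a = c⁻¹ * (φ ^ m) c)
    (hB : h ^ b = c⁻¹ * g * (φ ^ e) c) :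
    (List.ofFn fun k : Fin m => (φ ^ (e * (k : ℕ))) g).prod = c * h * c⁻¹ := by
  have hfix' : ∀ n : ℕ, (φ ^ n) h = h := by
    intro n
    induction n with
    | zero => rfl
    | succ n ih => rw [pow_succ, MulAut.mul_apply, hfix, ih]
  have hfixk : ∀ n k : ℕ, (φ ^ n) (h ^ k) = h ^ k := by
    intro n k; rw [map_pow, hfix' n]
  have hg : g = c * h ^ b * ((φ ^ e) c)⁻¹ := by
    rw [hB]; group
  have hstep : ∀ k : ℕ,
      (φ ^ (e * k)) g = (φ ^ (e * k)) c * h ^ b * ((φ ^ (e * (k + 1))) c)⁻¹ := by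
    intro k
    have : (φ ^ (e * (k + 1))) c = (φ ^ (e * k)) ((φ ^ e) c) := by
      rw [mul_add, mul_one, pow_add, MulAut.mul_apply]
    rw [hg, map_mul, map_mul, map_inv, hfixk, this]
  have hprod : ∀ n : ℕ,
      (List.ofFn fun k : Fin n => (φ ^ (e * (k : ℕ))) g).prod
        = c * h ^ (b * n) * ((φ ^ (e * n)) c)⁻¹ := by
    intro n
    induction n with
    | zero => simp
    | succ n ih =>
      rw [List.ofFn_succ', List.concat_eq_append, List.prod_append]
      simp only [Fin.coe_castSucc, Fin.val_last, List.prod_cons, List.prod_nil]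
      rw [ih, hstep n, mul_one]
      have : h ^ (b * (n + 1)) = h ^ (b * n) * h ^ b := by
        rw [← pow_add, mul_add, mul_one]
      rw [this]; group
  have hAm : ∀ j : ℕ, (φ ^ (m * j)) c = c * h ^ (a * j) := by
    intro j
    induction j with
    | zero => simp
    | succ j ih =>
      have h1 : (φ ^ (m * (j + 1))) c = (φ ^ (m * j)) ((φ ^ m) c) := by
        rw [mul_add, mul_one, pow_add, MulAut.mul_apply]
      have h2 : (φ ^ m) c = c * h ^ a := by
        have := hA; rw [eq_inv_mul_iff_mul_eq] at this
        rw [← this]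
      rw [h1, h2, map_mul, ih, hfixk, mul_assoc, ← pow_add, mul_add, mul_one]
  have hfin : (φ ^ (e * m)) c = c * h ^ (a * e) := by
    rw [mul_comm e m, hAm]
  rw [hprod m, hfin, hbez, pow_succ]
  group
end
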